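/- arXiv:math/0604127 — 6 statements merged into one kernel-verified Lean document; each statement's English description precedes it below -/
import Mathlib

section
/- Let R, Y, ξ be independent random variables with R taking values in [0,1], ξ standard Gaussian, and Y Gaussian with mean 0 and variance α². Set Z = σ(√R·Y + α√(1−R)·ξ) with σ > 0. Then Z is Gaussian with mean zero and variance σ²α². -/
open MeasureTheory ProbabilityTheory Real NNReal

lemma my_pdf_conv_aux (v1 v2 : ℝ≥0) (h1 : v1 ≠ 0) (h2 : v2 ≠ 0) (x y : ℝ) :
    gaussianPDFReal 0 v1 y * gaussianPDFReal 0 v2 (x - y)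
      = gaussianPDFReal 0 (v1 + v2) x
        * gaussianPDFReal (v1 * x / (v1 + v2)) (v1 * v2 / (v1 + v2)) y := by
  have ha : 0 < (v1 : ℝ) := by positivity
  have hb : 0 < (v2 : ℝ) := by positivity
  simp only [gaussianPDFReal, NNReal.coe_div, NNReal.coe_mul, NNReal.coe_add, sub_zero]
  rw [mul_mul_mul_comm, mul_mul_mul_comm ((√(2 * π * ((v1:ℝ) + (v2:ℝ))))⁻¹)]
  congr 1
  · rw [← mul_inv, ← mul_inv, ← Real.sqrt_mul (by positivity), ← Real.sqrt_mul (by positivity)]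
    congr 2
    field_simp
  · rw [← Real.exp_add, ← Real.exp_add]
    congr 1
    field_simp
    ring

lemma my_lintegral_conv (v1 v2 : ℝ≥0) (h1 : v1 ≠ 0) (h2 : v2 ≠ 0) (x : ℝ) :
    ∫⁻ y, gaussianPDF 0 v1 y * gaussianPDF 0 v2 (x - y) = gaussianPDF 0 (v1 + v2) x := by
  have hw : v1 * v2 / (v1 + v2) ≠ 0 := by
    simp [div_eq_zero_iff, h1, h2, add_eq_zero]
  simp only [gaussianPDF]
  have : ∀ y, ENNReal.ofReal (gaussianPDFReal 0 v1 y) * ENNReal.ofReal (gaussianPDFReal 0 v2 (x - y))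
      = ENNReal.ofReal (gaussianPDFReal 0 (v1 + v2) x * gaussianPDFReal (v1 * x / (v1 + v2)) (v1 * v2 / (v1 + v2)) y) := by
    intro y
    rw [← ENNReal.ofReal_mul (gaussianPDFReal_nonneg _ _ _), my_pdf_conv_aux v1 v2 h1 h2]
  simp_rw [this]
  rw [← ofReal_integral_eq_lintegral_ofReal
    ((integrable_gaussianPDFReal _ _).const_mul _)
    (ae_of_all _ fun y => mul_nonneg (gaussianPDFReal_nonneg _ _ _) (gaussianPDFReal_nonneg _ _ _))]
  rw [integral_const_mul, integral_gaussianPDFReal_eq_one _ hw, mul_one]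

lemma my_gaussian_conv (v1 v2 : ℝ≥0) :
    ((gaussianReal 0 v1).prod (gaussianReal 0 v2)).map (fun p : ℝ × ℝ => p.1 + p.2)
      = gaussianReal 0 (v1 + v2) := by
  rcases eq_or_ne v1 0 with rfl | h1
  · rw [gaussianReal_zero_var, Measure.dirac_prod,
      Measure.map_map (by fun_prop) (by fun_prop)]
    simp [Function.comp_def]
  rcases eq_or_ne v2 0 with rfl | h2
  · rw [gaussianReal_zero_var, Measure.prod_dirac,
      Measure.map_map (by fun_prop) (by fun_prop)]
    simp [Function.comp_def]
  have hV : v1 + v2 ≠ 0 := by simp [add_eq_zero, h1]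
  ext s hs
  rw [Measure.map_apply (by fun_prop) hs, Measure.prod_apply (hs.preimage (by fun_prop))]
  have hstep : ∀ y : ℝ, gaussianReal 0 v2 (Prod.mk y ⁻¹' ((fun p : ℝ × ℝ => p.1 + p.2) ⁻¹' s))
      = ∫⁻ x in s, gaussianPDF y v2 x := by
    intro y
    have : Prod.mk y ⁻¹' ((fun p : ℝ × ℝ => p.1 + p.2) ⁻¹' s) = (fun x => y + x) ⁻¹' s := rfl
    rw [this, ← Measure.map_apply (by fun_prop) hs, gaussianReal_map_const_add,
      zero_add, gaussianReal_of_var_ne_zero _ h2, withDensity_apply _ hs]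
  simp_rw [hstep]
  have hmeas : Measurable (fun q : ℝ × ℝ => gaussianPDF 0 v1 q.1 * gaussianPDF q.1 v2 q.2) := by
    unfold gaussianPDF gaussianPDFReal
    fun_prop
  have hm2 : Measurable fun y : ℝ => ∫⁻ x in s, gaussianPDF y v2 x := by
    apply Measurable.lintegral_prod_right (f := fun y x => gaussianPDF y v2 x)
    unfold gaussianPDF gaussianPDFReal
    fun_prop
  rw [gaussianReal_of_var_ne_zero _ h1,
    lintegral_withDensity_eq_lintegral_mul _ (measurable_gaussianPDF _ _) hm2]
  simp only [Pi.mul_apply]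
  have hpull : ∀ y : ℝ, gaussianPDF 0 v1 y * ∫⁻ x in s, gaussianPDF y v2 x
      = ∫⁻ x in s, gaussianPDF 0 v1 y * gaussianPDF y v2 x := by
    intro y
    rw [lintegral_const_mul _ (by unfold gaussianPDF gaussianPDFReal; fun_prop)]
  simp_rw [hpull]
  rw [lintegral_lintegral_swap hmeas.aemeasurable]
  have : ∀ x, ∫⁻ y, gaussianPDF 0 v1 y * gaussianPDF y v2 x = gaussianPDF 0 (v1 + v2) x := by
    intro x
    have hp : ∀ y, gaussianPDF y v2 x = gaussianPDF 0 v2 (x - y) := by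
      intro y
      simp [gaussianPDF, gaussianPDFReal]
    simp_rw [hp]
    exact my_lintegral_conv v1 v2 h1 h2 x
  simp_rw [this]
  rw [gaussianReal_of_var_ne_zero _ hV, withDensity_apply _ hs]

lemma my_per_r (α σ : ℝ) (hα : 0 < α) (hσ : 0 < σ) (r : ℝ) (hr : r ∈ Set.Icc (0:ℝ) 1) :
    ((gaussianReal 0 ⟨α^2, by positivity⟩).prod (gaussianReal 0 1)).map
        (fun p : ℝ × ℝ => σ * (Real.sqrt r * p.1 + α * Real.sqrt (1 - r) * p.2))
      = gaussianReal 0 ⟨σ^2 * α^2, by positivity⟩ := by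
  set v : ℝ≥0 := ⟨α^2, by positivity⟩ with hv
  have hfun : (fun p : ℝ × ℝ => σ * (Real.sqrt r * p.1 + α * Real.sqrt (1 - r) * p.2))
      = (fun p : ℝ × ℝ => p.1 + p.2) ∘
        (Prod.map (fun x => (σ * Real.sqrt r) * x) (fun x => (σ * (α * Real.sqrt (1 - r))) * x)) := by
    funext p; simp [Prod.map]; ring
  rw [hfun, ← Measure.map_map (by fun_prop) (by fun_prop),
    ← Measure.map_prod_map _ _ (by fun_prop) (by fun_prop),
    gaussianReal_map_const_mul, gaussianReal_map_const_mul, mul_zero, mul_zero,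
    my_gaussian_conv]
  congr 1
  apply NNReal.coe_injective
  change (σ * √r) ^ 2 * α ^ 2 + (σ * (α * √(1 - r))) ^ 2 * 1 = σ ^ 2 * α ^ 2
  rw [mul_pow, mul_pow, mul_pow, Real.sq_sqrt hr.1, Real.sq_sqrt (by linarith [hr.2])]
  ring

theorem stmt1 {Ω : Type*} [MeasurableSpace Ω] (μ : Measure Ω) [IsProbabilityMeasure μ]
    (R Y ξ : Ω → ℝ) (hR : Measurable R) (hY : Measurable Y) (hξ : Measurable ξ)
    (hind : iIndepFun ![R, Y, ξ] μ)
    (hR01 : ∀ᵐ ω ∂μ, R ω ∈ Set.Icc (0:ℝ) 1)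
    (α σ : ℝ) (hα : 0 < α) (hσ : 0 < σ)
    (hYlaw : μ.map Y = gaussianReal 0 ⟨α^2, by positivity⟩)
    (hξlaw : μ.map ξ = gaussianReal 0 1) :
    μ.map (fun ω => σ * (Real.sqrt (R ω) * Y ω + α * Real.sqrt (1 - R ω) * ξ ω))
      = gaussianReal 0 ⟨σ^2 * α^2, by positivity⟩ := by
  have hmeas : ∀ i, Measurable (![R, Y, ξ] i) := by
    intro i; fin_cases i <;> simpa
  have h12 : IndepFun (fun ω => (Y ω, ξ ω)) R μ := by
    have := hind.indepFun_prodMk hmeas 1 2 0 (by decide) (by decide)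
    simpa using this
  have hYξind : IndepFun Y ξ μ := by
    have := hind.indepFun (i := 1) (j := 2) (by decide)
    simpa using this
  have hYξ : μ.map (fun ω => (Y ω, ξ ω))
      = (gaussianReal 0 ⟨α^2, by positivity⟩).prod (gaussianReal 0 1) := by
    rw [← hYlaw, ← hξlaw]
    exact (indepFun_iff_map_prod_eq_prod_map_map hY.aemeasurable hξ.aemeasurable).mp hYξind
  have hjoint : μ.map (fun ω => (R ω, (Y ω, ξ ω)))
      = (μ.map R).prod ((gaussianReal 0 ⟨α^2, by positivity⟩).prod (gaussianReal 0 1)) := by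
    rw [← hYξ]
    exact (indepFun_iff_map_prod_eq_prod_map_map hR.aemeasurable
      (hY.prodMk hξ).aemeasurable).mp h12.symm
  set g : ℝ × (ℝ × ℝ) → ℝ :=
    fun q => σ * (Real.sqrt q.1 * q.2.1 + α * Real.sqrt (1 - q.1) * q.2.2) with hg
  have hgm : Measurable g := by fun_prop
  have hcomp : μ.map (fun ω => σ * (Real.sqrt (R ω) * Y ω + α * Real.sqrt (1 - R ω) * ξ ω))
      = ((μ.map R).prod ((gaussianReal 0 ⟨α^2, by positivity⟩).prod (gaussianReal 0 1))).map g := by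
    rw [← hjoint, Measure.map_map hgm (hR.prodMk (hY.prodMk hξ))]
    rfl
  rw [hcomp]
  have : IsProbabilityMeasure (μ.map R) := Measure.isProbabilityMeasure_map hR.aemeasurable
  have hae : ∀ᵐ r ∂(μ.map R), r ∈ Set.Icc (0:ℝ) 1 :=
    (ae_map_iff hR.aemeasurable measurableSet_Icc).mpr hR01
  ext s hs
  have : IsProbabilityMeasure (gaussianReal 0 ⟨α^2, by positivity⟩) :=
    ProbabilityTheory.instIsProbabilityMeasureGaussianReal _ _
  rw [Measure.map_apply hgm hs, Measure.prod_apply (hs.preimage hgm)]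
  have hptw : ∀ᵐ r ∂(μ.map R),
      ((gaussianReal 0 ⟨α^2, by positivity⟩).prod (gaussianReal 0 1)) (Prod.mk r ⁻¹' (g ⁻¹' s))
        = gaussianReal 0 ⟨σ^2 * α^2, by positivity⟩ s := by
    filter_upwards [hae] with r hr
    have hpre : Prod.mk r ⁻¹' (g ⁻¹' s)
        = (fun p : ℝ × ℝ => σ * (Real.sqrt r * p.1 + α * Real.sqrt (1 - r) * p.2)) ⁻¹' s := rfl
    rw [hpre, ← Measure.map_apply (by fun_prop) hs, my_per_r α σ hα hσ r hr]
  rw [lintegral_congr_ae hptw, lintegral_const, measure_univ, mul_one]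
end

section
/- Let R, Y, ξ be independent with R ∈ [0,1] a.s., ξ ~ N(0,1), Y ~ N(0,α²), α > 0, σ > 0, and Z = σ(√R·Y + α√(1−R)·ξ). If (Y,Z) is a bivariate Gaussian vector, then R is almost surely constant. -/
open MeasureTheory ProbabilityTheory NNReal Real Complex

lemma cos_sin_gauss (b c : ℝ) (hb : 0 < b) :
    (∫ x : ℝ, Real.cos (c*x) * Real.exp (-b*x^2)) = Real.sqrt (π/b) * Real.exp (-c^2/(4*b)) ∧
    (∫ x : ℝ, Real.sin (c*x) * Real.exp (-b*x^2)) = 0 := by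
  have hb' : (0:ℝ) < (b:ℂ).re := by simpa using hb
  have h := fourierIntegral_gaussian hb' (c : ℂ)
  have hint : Integrable (fun x : ℝ => Complex.exp (Complex.I * c * x) * Complex.exp (-(b:ℂ) * x^2)) := by
    have h2 := integrable_cexp_quadratic hb' (Complex.I * c) 0
    refine h2.congr (Filter.Eventually.of_forall fun x => ?_)
    simp only
    rw [← Complex.exp_add]
    congr 1
    ring
  have heq : ∀ x : ℝ, Complex.exp (Complex.I * c * x) * Complex.exp (-(b:ℂ) * x^2)
      = Complex.ofReal (Real.cos (c*x) * Real.exp (-b*x^2))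
        + Complex.ofReal (Real.sin (c*x) * Real.exp (-b*x^2)) * Complex.I := by
    intro x
    have h3 : Complex.I * c * x = ((c*x : ℝ) : ℂ) * Complex.I := by push_cast; ring
    rw [h3, Complex.exp_mul_I]
    rw [show (-(b:ℂ) * x^2) = ((-b*x^2 : ℝ) : ℂ) by push_cast; ring, ← Complex.ofReal_exp,
      ← Complex.ofReal_cos, ← Complex.ofReal_sin]
    push_cast
    ring
  have hRHS : (↑π / (b:ℂ)) ^ (1 / 2 : ℂ) * Complex.exp (-(c:ℂ) ^ 2 / (4 * b))
      = Complex.ofReal (Real.sqrt (π/b) * Real.exp (-c^2/(4*b))) := by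
    rw [show (↑π / (b:ℂ)) = ((π/b : ℝ) : ℂ) by push_cast; ring,
      show (1/2 : ℂ) = ((1/2 : ℝ) : ℂ) by norm_num,
      ← Complex.ofReal_cpow (by positivity),
      show (-(c:ℂ) ^ 2 / (4 * b)) = ((-c^2/(4*b) : ℝ) : ℂ) by push_cast; ring,
      ← Complex.ofReal_exp, ← Complex.ofReal_mul, ← Real.rpow_natCast]
    norm_num [Real.sqrt_eq_rpow]
  simp_rw [heq, hRHS] at h
  have hint2 : Integrable (fun x : ℝ => Complex.ofReal (Real.cos (c*x) * Real.exp (-b*x^2))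
      + Complex.ofReal (Real.sin (c*x) * Real.exp (-b*x^2)) * Complex.I) :=
    hint.congr (Filter.Eventually.of_forall heq)
  have hre := integral_re hint2
  have him := integral_im hint2
  rw [h] at hre him
  simp only [RCLike.re_to_complex, RCLike.im_to_complex, Complex.add_re, Complex.add_im,
    Complex.ofReal_re, Complex.ofReal_im, Complex.mul_re, Complex.mul_im, Complex.I_re,
    Complex.I_im, mul_zero, mul_one, zero_mul, sub_zero, zero_add, add_zero, zero_sub] at hre him
  constructor
  · simpa using hre
  · simpa using him

lemma int_cos_gauss (b c : ℝ) (hb : 0 < b) :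
    Integrable (fun x : ℝ => Real.cos (c*x) * Real.exp (-b*x^2)) := by
  refine (integrable_exp_neg_mul_sq hb).mono' ?_ (Filter.Eventually.of_forall fun x => ?_)
  · exact ((Real.continuous_cos.comp (continuous_const.mul continuous_id)).mul
      (Real.continuous_exp.comp (by continuity))).aestronglyMeasurable
  · rw [norm_mul, Real.norm_eq_abs, Real.norm_eq_abs, Real.abs_exp]
    nlinarith [Real.abs_cos_le_one (c*x), Real.exp_pos (-b*x^2), abs_nonneg (Real.cos (c*x))]

lemma int_sin_gauss (b c : ℝ) (hb : 0 < b) :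
    Integrable (fun x : ℝ => Real.sin (c*x) * Real.exp (-b*x^2)) := by
  refine (integrable_exp_neg_mul_sq hb).mono' ?_ (Filter.Eventually.of_forall fun x => ?_)
  · exact ((Real.continuous_sin.comp (continuous_const.mul continuous_id)).mul
      (Real.continuous_exp.comp (by continuity))).aestronglyMeasurable
  · rw [norm_mul, Real.norm_eq_abs, Real.norm_eq_abs, Real.abs_exp]
    nlinarith [Real.abs_sin_le_one (c*x), Real.exp_pos (-b*x^2), abs_nonneg (Real.sin (c*x))]

lemma integral_cos_gaussianReal (m : ℝ) (v : ℝ≥0) (c θ : ℝ) :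
    ∫ x, Real.cos (c*x + θ) ∂(gaussianReal m v) = Real.exp (-(v:ℝ)*c^2/2) * Real.cos (c*m + θ) := by
  rcases eq_or_ne v 0 with hv | hv
  · subst hv
    rw [gaussianReal_zero_var, integral_dirac]
    simp
  · have hv' : (0:ℝ) < v := lt_of_le_of_ne v.2 (by exact_mod_cast Ne.symm hv)
    have hb : (0:ℝ) < 1/(2*(v:ℝ)) := by positivity
    rw [gaussianReal_of_var_ne_zero m hv]
    have hpdf : (gaussianPDF m v) = fun x => ((gaussianPDFReal m v x).toNNReal : ENNReal) := rfl
    rw [hpdf, integral_withDensity_eq_integral_smul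
      ((measurable_gaussianPDFReal m v).real_toNNReal) _]
    have hsmul : ∀ x : ℝ, (gaussianPDFReal m v x).toNNReal • Real.cos (c*x + θ)
        = gaussianPDFReal m v x * Real.cos (c*x + θ) := by
      intro x
      rw [NNReal.smul_def, Real.coe_toNNReal _ (gaussianPDFReal_nonneg m v x), smul_eq_mul]
    simp_rw [hsmul]
    rw [← integral_add_right_eq_self (fun x => gaussianPDFReal m v x * Real.cos (c*x + θ)) m]
    have hexp : ∀ x : ℝ, gaussianPDFReal m v (x + m) * Real.cos (c*(x+m) + θ)
        = (Real.sqrt (2*π*(v:ℝ)))⁻¹ *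
          (Real.cos (c*m+θ) * (Real.cos (c*x) * Real.exp (-(1/(2*(v:ℝ)))*x^2))
           - Real.sin (c*m+θ) * (Real.sin (c*x) * Real.exp (-(1/(2*(v:ℝ)))*x^2))) := by
      intro x
      rw [gaussianPDFReal]
      have h1 : c*(x+m) + θ = c*x + (c*m + θ) := by ring
      rw [h1, Real.cos_add]
      have h2 : -(x + m - m)^2 / (2*(v:ℝ)) = -(1/(2*(v:ℝ)))*x^2 := by
        field_simp
        ring
      rw [h2]
      ring
    simp_rw [hexp]
    rw [integral_const_mul, integral_sub ((int_cos_gauss _ c hb).const_mul _)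
      ((int_sin_gauss _ c hb).const_mul _), integral_const_mul, integral_const_mul,
      (cos_sin_gauss _ c hb).1, (cos_sin_gauss _ c hb).2]
    have h3 : Real.sqrt (π/(1/(2*(v:ℝ)))) = Real.sqrt (2*π*(v:ℝ)) := by
      congr 1
      field_simp
    have h4 : -c^2/(4*(1/(2*(v:ℝ)))) = -(v:ℝ)*c^2/2 := by
      field_simp
      ring
    rw [h3, h4, mul_zero, sub_zero]
    have h5 : Real.sqrt (2*π*(v:ℝ)) ≠ 0 := by positivity
    field_simp

lemma integrable_cos_aux {δ : Type*} [MeasurableSpace δ] (μ : Measure δ) [IsFiniteMeasure μ]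
    {g : δ → ℝ} (hg : AEStronglyMeasurable g μ) :
    Integrable (fun x => Real.cos (g x)) μ := by
  refine (integrable_const 1).mono' (Real.continuous_cos.comp_aestronglyMeasurable hg)
    (Filter.Eventually.of_forall fun x => ?_)
  simpa using Real.abs_cos_le_one _

lemma double_int (vY vZ : ℝ≥0) (a b : ℝ) :
    ∫ p : ℝ × ℝ, Real.cos (a * p.1 + b * p.2) ∂((gaussianReal 0 vY).prod (gaussianReal 0 vZ))
      = Real.exp (-((vY:ℝ)*a^2 + (vZ:ℝ)*b^2)/2) := by
  have hcont : Continuous (fun p : ℝ × ℝ => a * p.1 + b * p.2) := by continuity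
  rw [integral_prod _ (integrable_cos_aux _ hcont.aestronglyMeasurable)]
  have hinner : ∀ x : ℝ, ∫ y, Real.cos (a * x + b * y) ∂(gaussianReal 0 vZ)
      = Real.exp (-(vZ:ℝ)*b^2/2) * Real.cos (a*x) := by
    intro x
    have h := integral_cos_gaussianReal 0 vZ b (a*x)
    simp only [mul_zero, zero_add] at h
    rw [← h]
    congr 1 with y
    ring_nf
  simp_rw [hinner]
  rw [integral_const_mul]
  have h2 := integral_cos_gaussianReal 0 vY a 0
  simp only [mul_zero, zero_add, add_zero, Real.cos_zero, mul_one] at h2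
  rw [h2, ← Real.exp_add]
  congr 1
  ring

noncomputable def Gf (α σ : ℝ) (r : ℝ) : ℝ :=
  α^2*(1+σ*Real.sqrt r)^2 + (σ*α*Real.sqrt (1-r))^2

lemma Gf_cont (α σ : ℝ) : Continuous (Gf α σ) := by
  unfold Gf
  fun_prop

lemma Gf_nonneg (α σ r : ℝ) : 0 ≤ Gf α σ r := by
  unfold Gf; positivity

noncomputable def Ff (t α σ : ℝ) : ℝ × (ℝ × ℝ) → ℝ :=
  fun p => Real.cos ((t * (1 + σ * Real.sqrt p.1)) * p.2.1
      + (t * (σ * α * Real.sqrt (1 - p.1))) * p.2.2)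

lemma Ff_cont (t α σ : ℝ) : Continuous (Ff t α σ) := by
  unfold Ff
  fun_prop

lemma key_identity {Ω : Type*} [MeasurableSpace Ω] (μ : Measure Ω) [IsProbabilityMeasure μ]
    (R Y ξ : Ω → ℝ) (hR : Measurable R) (hY : Measurable Y) (hξ : Measurable ξ)
    (hind : iIndepFun ![R, Y, ξ] μ)
    (α σ : ℝ) (vα : ℝ≥0) (hvα : (vα:ℝ) = α^2)
    (hYlaw : μ.map Y = gaussianReal 0 vα)
    (hξlaw : μ.map ξ = gaussianReal 0 1)
    (Z : Ω → ℝ)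
    (hZ : Z = fun ω => σ * (Real.sqrt (R ω) * Y ω + α * Real.sqrt (1 - R ω) * ξ ω))
    (t : ℝ) :
    ∫ ω, Real.cos (t * (Y ω + Z ω)) ∂μ = ∫ ω, Real.exp (-(t^2 * Gf α σ (R ω))/2) ∂μ := by
  have hmeas : ∀ i, Measurable (![R, Y, ξ] i) := by
    intro i; fin_cases i
    · exact hR
    · exact hY
    · exact hξ
  have hYξ : IndepFun Y ξ μ := by
    have h := hind.indepFun (show (1:Fin 3) ≠ 2 by decide)
    simpa using h
  have hpair : IndepFun (fun ω => (Y ω, ξ ω)) R μ := by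
    have h := hind.indepFun_prodMk hmeas 1 2 0 (by decide) (by decide)
    simpa using h
  have hmapYξ : μ.map (fun ω => (Y ω, ξ ω)) = (gaussianReal 0 vα).prod (gaussianReal 0 1) := by
    rw [← hYlaw, ← hξlaw]
    exact (indepFun_iff_map_prod_eq_prod_map_map hY.aemeasurable hξ.aemeasurable).mp hYξ
  have hmaptrip : μ.map (fun ω => (R ω, (Y ω, ξ ω)))
      = (μ.map R).prod ((gaussianReal 0 vα).prod (gaussianReal 0 1)) := by
    rw [← hmapYξ]
    exact (indepFun_iff_map_prod_eq_prod_map_map hR.aemeasurable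
      (hY.prodMk hξ).aemeasurable).mp hpair.symm
  have hstep1 : ∫ ω, Real.cos (t * (Y ω + Z ω)) ∂μ
      = ∫ ω, Ff t α σ (R ω, (Y ω, ξ ω)) ∂μ := by
    congr 1 with ω
    rw [hZ]
    unfold Ff
    simp only
    congr 1
    ring
  haveI : IsProbabilityMeasure (μ.map R) := Measure.isProbabilityMeasure_map hR.aemeasurable
  have hstep2 : ∫ ω, Ff t α σ (R ω, (Y ω, ξ ω)) ∂μ
      = ∫ p, Ff t α σ p ∂((μ.map R).prod ((gaussianReal 0 vα).prod (gaussianReal 0 1))) := by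
    rw [← hmaptrip, integral_map (hR.prodMk (hY.prodMk hξ)).aemeasurable
      (Ff_cont t α σ).aestronglyMeasurable]
  have hFint : Integrable (Ff t α σ)
      ((μ.map R).prod ((gaussianReal 0 vα).prod (gaussianReal 0 1))) := by
    unfold Ff
    exact integrable_cos_aux _ (Continuous.aestronglyMeasurable (by fun_prop))
  have hstep3 : ∫ p, Ff t α σ p ∂((μ.map R).prod ((gaussianReal 0 vα).prod (gaussianReal 0 1)))
      = ∫ r, Real.exp (-(t^2 * Gf α σ r)/2) ∂(μ.map R) := by
    rw [integral_prod _ hFint]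
    congr 1 with r
    unfold Ff
    rw [double_int vα 1 (t * (1 + σ * Real.sqrt r)) (t * (σ * α * Real.sqrt (1 - r)))]
    congr 1
    rw [hvα]
    unfold Gf
    push_cast
    ring
  have hstep4 : ∫ r, Real.exp (-(t^2 * Gf α σ r)/2) ∂(μ.map R)
      = ∫ ω, Real.exp (-(t^2 * Gf α σ (R ω))/2) ∂μ := by
    rw [integral_map hR.aemeasurable]
    exact Continuous.aestronglyMeasurable (by have := Gf_cont α σ; fun_prop)
  rw [hstep1, hstep2, hstep3, hstep4]

theorem stmt3 {Ω : Type*} [MeasurableSpace Ω] (μ : Measure Ω) [IsProbabilityMeasure μ]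
    (R Y ξ : Ω → ℝ) (hR : Measurable R) (hY : Measurable Y) (hξ : Measurable ξ)
    (hind : iIndepFun ![R, Y, ξ] μ)
    (hR01 : ∀ᵐ ω ∂μ, R ω ∈ Set.Icc (0:ℝ) 1)
    (α σ : ℝ) (hα : 0 < α) (hσ : 0 < σ)
    (hYlaw : μ.map Y = gaussianReal 0 ⟨α^2, by positivity⟩)
    (hξlaw : μ.map ξ = gaussianReal 0 1)
    (Z : Ω → ℝ)
    (hZ : Z = fun ω => σ * (Real.sqrt (R ω) * Y ω + α * Real.sqrt (1 - R ω) * ξ ω))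
    (hgauss : ∀ a b : ℝ, ∃ (m : ℝ) (v : ℝ≥0),
      μ.map (fun ω => a * Y ω + b * Z ω) = gaussianReal m v) :
    ∃ c : ℝ, R =ᵐ[μ] fun _ => c := by
  obtain ⟨m, v, hmv⟩ := hgauss 1 1
  simp only [one_mul] at hmv
  have hZm : Measurable Z := by rw [hZ]; fun_prop
  have hW : Measurable (fun ω => Y ω + Z ω) := hY.add hZm
  have hGm : Measurable (fun ω => Gf α σ (R ω)) := (Gf_cont α σ).measurable.comp hR
  -- integrability of the exponential integrands
  have hIexp : ∀ s : ℝ, 0 ≤ s → Integrable (fun ω => Real.exp (-(s * Gf α σ (R ω))/2)) μ := by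
    intro s hs
    refine (integrable_const 1).mono' (Measurable.aestronglyMeasurable (by fun_prop))
      (Filter.Eventually.of_forall fun ω => ?_)
    rw [Real.norm_eq_abs, Real.abs_exp]
    apply Real.exp_le_one_iff.mpr
    have := Gf_nonneg α σ (R ω)
    have : 0 ≤ s * Gf α σ (R ω) := mul_nonneg hs this
    linarith
  -- the master identity
  have hstar : ∀ t : ℝ, ∫ ω, Real.exp (-(t^2 * Gf α σ (R ω))/2) ∂μ
      = Real.exp (-(v:ℝ)*t^2/2) * Real.cos (t*m) := by
    intro t
    have hmap : ∫ x, Real.cos (t*x) ∂(μ.map (fun ω => Y ω + Z ω))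
        = ∫ ω, Real.cos (t * (Y ω + Z ω)) ∂μ :=
      integral_map (f := fun x => Real.cos (t*x)) hW.aemeasurable
        (Continuous.aestronglyMeasurable (by fun_prop))
    rw [← key_identity μ R Y ξ hR hY hξ hind α σ ⟨α^2, by positivity⟩ rfl hYlaw hξlaw Z hZ t,
      ← hmap, hmv]
    have h := integral_cos_gaussianReal m v t 0
    simpa using h
  -- lower bound: positivity
  have hlow : ∀ t : ℝ, Real.exp (-(t^2 * (α^2*(1+σ)^2 + (σ*α)^2))/2)
      ≤ ∫ ω, Real.exp (-(t^2 * Gf α σ (R ω))/2) ∂μ := by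
    intro t
    have hm := integral_mono_ae (integrable_const (Real.exp (-(t^2 * (α^2*(1+σ)^2 + (σ*α)^2))/2)))
      (hIexp (t^2) (sq_nonneg t)) ?_
    · simpa using hm
    · filter_upwards [hR01] with ω hω
      have h1 : Real.sqrt (R ω) ≤ 1 := Real.sqrt_le_one.mpr hω.2
      have h1' : 0 ≤ Real.sqrt (R ω) := Real.sqrt_nonneg _
      have h2 : Real.sqrt (1 - R ω) ≤ 1 := Real.sqrt_le_one.mpr (by linarith [hω.1])
      have h2' : 0 ≤ Real.sqrt (1 - R ω) := Real.sqrt_nonneg _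
      have hGle : Gf α σ (R ω) ≤ α^2*(1+σ)^2 + (σ*α)^2 := by
        unfold Gf
        have e1 : (1 + σ*Real.sqrt (R ω))^2 ≤ (1+σ)^2 :=
          pow_le_pow_left₀ (by positivity) (by nlinarith) 2
        have e2 : (σ*α*Real.sqrt (1 - R ω))^2 ≤ (σ*α)^2 :=
          pow_le_pow_left₀ (by positivity) (by nlinarith [mul_pos hσ hα]) 2
        nlinarith [sq_nonneg α]
      apply Real.exp_le_exp.mpr
      have := mul_le_mul_of_nonneg_left hGle (sq_nonneg t)
      linarith
  -- m = 0
  have hm0 : m = 0 := by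
    by_contra hm
    have h := hstar (π/m)
    have hp : (0:ℝ) < ∫ ω, Real.exp (-((π/m)^2 * Gf α σ (R ω))/2) ∂μ :=
      lt_of_lt_of_le (Real.exp_pos _) (hlow (π/m))
    rw [h] at hp
    rw [div_mul_cancel₀ _ hm, Real.cos_pi] at hp
    nlinarith [Real.exp_pos (-(v:ℝ)*(π/m)^2/2)]
  subst hm0
  -- the two key equalities
  have E1 : ∫ ω, Real.exp (-(1 * Gf α σ (R ω))/2) ∂μ = Real.exp (-(v:ℝ)/2) := by
    have h := hstar 1
    simpa using h
  have E2 : ∫ ω, Real.exp (-(2 * Gf α σ (R ω))/2) ∂μ = Real.exp (-(v:ℝ)) := by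
    have h := hstar (Real.sqrt 2)
    rw [Real.sq_sqrt (by norm_num : (0:ℝ) ≤ 2)] at h
    rw [h, mul_zero, Real.cos_zero, mul_one]
    congr 1
    ring
  -- the square integrates to zero
  have hexpand : ∀ ω, (Real.exp (-(1 * Gf α σ (R ω))/2) - Real.exp (-(v:ℝ)/2))^2
      = Real.exp (-(2 * Gf α σ (R ω))/2)
        - 2 * Real.exp (-(v:ℝ)/2) * Real.exp (-(1 * Gf α σ (R ω))/2)
        + Real.exp (-(v:ℝ)/2)^2 := by
    intro ω
    have h2 : Real.exp (-(1 * Gf α σ (R ω))/2) ^ 2 = Real.exp (-(2 * Gf α σ (R ω))/2) := by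
      rw [sq, ← Real.exp_add]; congr 1; ring
    rw [sub_sq, h2]; ring
  have hIsq : Integrable
      (fun ω => (Real.exp (-(1 * Gf α σ (R ω))/2) - Real.exp (-(v:ℝ)/2))^2) μ := by
    have : (fun ω => (Real.exp (-(1 * Gf α σ (R ω))/2) - Real.exp (-(v:ℝ)/2))^2)
        = fun ω => Real.exp (-(2 * Gf α σ (R ω))/2)
          - 2 * Real.exp (-(v:ℝ)/2) * Real.exp (-(1 * Gf α σ (R ω))/2)
          + Real.exp (-(v:ℝ)/2)^2 := funext hexpand
    rw [this]
    exact (((hIexp 2 (by norm_num)).sub ((hIexp 1 (by norm_num)).const_mul _)).add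
      (integrable_const _))
  have h0 : ∫ ω, (Real.exp (-(1 * Gf α σ (R ω))/2) - Real.exp (-(v:ℝ)/2))^2 ∂μ = 0 := by
    have hg : Integrable
        (fun ω => 2 * Real.exp (-(v:ℝ)/2) * Real.exp (-(1 * Gf α σ (R ω))/2)) μ :=
      (hIexp 1 (by norm_num)).const_mul _
    have hf : Integrable (fun ω => Real.exp (-(2 * Gf α σ (R ω))/2)
        - 2 * Real.exp (-(v:ℝ)/2) * Real.exp (-(1 * Gf α σ (R ω))/2)) μ :=
      (hIexp 2 (by norm_num)).sub hg
    simp_rw [hexpand]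
    rw [integral_add hf (integrable_const _),
      integral_sub (hIexp 2 (by norm_num)) hg,
      integral_const_mul, integral_const, E1, E2]
    simp only [measure_univ, ENNReal.toReal_one, probReal_univ, one_smul]
    have key : Real.exp (-(v:ℝ)/2) * Real.exp (-(v:ℝ)/2) = Real.exp (-(v:ℝ)) := by
      rw [← Real.exp_add]; congr 1; ring
    nlinarith [key]
  have hae : ∀ᵐ ω ∂μ, (Real.exp (-(1 * Gf α σ (R ω))/2) - Real.exp (-(v:ℝ)/2))^2 = 0 := by
    have := (integral_eq_zero_iff_of_nonneg (fun ω => sq_nonneg _) hIsq).mp h0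
    filter_upwards [this] with ω hω using hω
  refine ⟨(((v:ℝ) - α^2*(1+σ^2))/(2*α^2*σ))^2, ?_⟩
  filter_upwards [hae, hR01] with ω h1 h2
  have h3 : Real.exp (-(1 * Gf α σ (R ω))/2) = Real.exp (-(v:ℝ)/2) := by
    have := pow_eq_zero_iff (n := 2) (by norm_num) |>.mp h1
    linarith [sub_eq_zero.mp this]
  have h4 : Gf α σ (R ω) = (v:ℝ) := by
    have := Real.exp_eq_exp.mp h3
    linarith
  have hs1 : Real.sqrt (R ω) ^ 2 = R ω := Real.sq_sqrt h2.1
  have hs2 : Real.sqrt (1 - R ω) ^ 2 = 1 - R ω := Real.sq_sqrt (by linarith [h2.2])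
  have hG' : α^2*(1+σ*Real.sqrt (R ω))^2 + (σ*α*Real.sqrt (1 - R ω))^2 = (v:ℝ) := h4
  have hlin : 2*α^2*σ*Real.sqrt (R ω) = (v:ℝ) - α^2*(1+σ^2) := by
    linear_combination hG' - α^2*σ^2*hs1 - α^2*σ^2*hs2
  have hsr : Real.sqrt (R ω) = ((v:ℝ) - α^2*(1+σ^2))/(2*α^2*σ) := by
    rw [eq_div_iff (by positivity)]
    linarith
  calc R ω = Real.sqrt (R ω) ^ 2 := hs1.symm
    _ = (((v:ℝ) - α^2*(1+σ^2))/(2*α^2*σ))^2 := by rw [hsr]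
end

section
/- Let R₁, R₂, ξ₁, ξ₂ be independent random variables with R₁, R₂ ∈ [0,1] a.s. and ξ₁, ξ₂ ~ N(0,1). Define R = R₁R₂ and ξ = (√((1−R₁)R₂)/√(1−R)·1_{R<1} + 1_{R=1})·ξ₁ + (√(1−R₂)/√(1−R))·1_{R<1}·ξ₂. Then ξ is standard Gaussian and independent of R. -/
open MeasureTheory ProbabilityTheory Real


lemma gauss_pdf_conv (a b : ℝ) (hb : b ≠ 0) (hab : a^2 + b^2 = 1) (t : ℝ) :
    ∫ x : ℝ, gaussianPDFReal 0 1 x * gaussianPDFReal (a*x) ⟨b^2, sq_nonneg b⟩ t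
      = gaussianPDFReal 0 1 t := by
  have hb2 : (0:ℝ) < b^2 := by positivity
  have hπ := Real.pi_pos
  have hs : (0:ℝ) < √(2*π*b^2) := Real.sqrt_pos.mpr (by positivity)
  have key : ∀ x : ℝ, gaussianPDFReal 0 1 x * gaussianPDFReal (a*x) ⟨b^2, sq_nonneg b⟩ t
      = ((√(2*π*b^2))⁻¹ * (√(2*π))⁻¹ * rexp (-t^2/2)) * rexp (-(2*b^2)⁻¹ * (x - a*t)^2) := by
    intro x
    simp only [gaussianPDFReal, NNReal.coe_mk, NNReal.coe_one, mul_one, sub_zero]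
    change (√(2*π))⁻¹ * rexp (-x^2/2) * ((√(2*π*b^2))⁻¹ * rexp (-(t-a*x)^2/(2*b^2))) = _
    rw [show (√(2*π))⁻¹ * rexp (-x^2/2) * ((√(2*π*b^2))⁻¹ * rexp (-(t-a*x)^2/(2*b^2)))
        = (√(2*π*b^2))⁻¹ * (√(2*π))⁻¹ * (rexp (-x^2/2) * rexp (-(t-a*x)^2/(2*b^2))) by ring,
      ← Real.exp_add, mul_assoc ((√(2*π*b^2))⁻¹ * (√(2*π))⁻¹), ← Real.exp_add]
    congr 1
    congr 1
    field_simp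
    linear_combination (t^2 - x^2) * hab
  rw [MeasureTheory.integral_congr_ae (Filter.Eventually.of_forall key),
    MeasureTheory.integral_const_mul]
  have : ∫ x : ℝ, rexp (-(2*b^2)⁻¹ * (x - a*t)^2) = √(2*π*b^2) := by
    rw [integral_sub_right_eq_self (μ := volume) (fun x => rexp (-(2*b^2)⁻¹ * x^2)) (a*t),
      integral_gaussian]
    rw [show π / (2*b^2)⁻¹ = 2*π*b^2 by field_simp]
  rw [this]
  simp only [gaussianPDFReal, NNReal.coe_one, mul_one, sub_zero]
  field_simp

lemma gauss_map_line (a b : ℝ) (hab : a^2 + b^2 = 1) :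
    ((gaussianReal 0 1).prod (gaussianReal 0 1)).map (fun z : ℝ × ℝ => a * z.1 + b * z.2)
      = gaussianReal 0 1 := by
  by_cases hb : b = 0
  · subst hb
    have ha2 : a^2 = 1 := by linarith [hab]
    have : (fun z : ℝ × ℝ => a * z.1 + 0 * z.2) = (fun x : ℝ => a * x) ∘ Prod.fst := by
      funext z; simp
    rw [this, ← Measure.map_map (by fun_prop) measurable_fst, Measure.map_fst_prod]
    simp only [measure_univ, one_smul]
    rw [gaussianReal_map_const_mul]
    norm_num
    congr 1
    ext
    simp [ha2]
  · have hb2 : (0:ℝ) < b^2 := by positivity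
    have hv : (⟨b^2, sq_nonneg b⟩ : NNReal) ≠ 0 := by
      intro h
      exact hb (pow_eq_zero_iff (n := 2) (by norm_num) |>.mp (congrArg Subtype.val h))
    set v : NNReal := ⟨b^2, sq_nonneg b⟩ with hvdef
    have hlin : Measurable fun z : ℝ × ℝ => a * z.1 + b * z.2 := by fun_prop
    have hjoint : Measurable fun p : ℝ × ℝ => gaussianPDF (a*p.1) v p.2 := by
      simp only [gaussianPDF, gaussianPDFReal]
      exact ENNReal.measurable_ofReal.comp (by fun_prop)
    have inner_eq : ∀ t : ℝ, ∫⁻ x : ℝ, gaussianPDF 0 1 x * gaussianPDF (a*x) v t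
        = gaussianPDF 0 1 t := by
      intro t
      have hbd : ∀ x : ℝ, ‖gaussianPDFReal (a*x) v t‖ ≤ (√(2*π*(v:ℝ)))⁻¹ := by
        intro x
        rw [Real.norm_of_nonneg (gaussianPDFReal_nonneg _ _ _)]
        unfold gaussianPDFReal
        have h1 : rexp (-(t - a*x)^2 / (2*(v:ℝ))) ≤ 1 := by
          apply Real.exp_le_one_iff.mpr
          apply div_nonpos_of_nonpos_of_nonneg
          · simp [sq_nonneg]
          · positivity
        calc (√(2*π*(v:ℝ)))⁻¹ * rexp (-(t - a*x)^2 / (2*(v:ℝ)))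
            ≤ (√(2*π*(v:ℝ)))⁻¹ * 1 := by
              apply mul_le_mul_of_nonneg_left h1 (by positivity)
          _ = (√(2*π*(v:ℝ)))⁻¹ := mul_one _
      have hint : Integrable (fun x => gaussianPDFReal (a*x) v t * gaussianPDFReal 0 1 x) := by
        apply (integrable_gaussianPDFReal 0 1).bdd_mul
        · apply Measurable.aestronglyMeasurable
          unfold gaussianPDFReal
          fun_prop
        · exact Filter.Eventually.of_forall hbd
      have hint' : Integrable (fun x => gaussianPDFReal 0 1 x * gaussianPDFReal (a*x) v t) := by
        simpa only [mul_comm] using hint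
      calc ∫⁻ x : ℝ, gaussianPDF 0 1 x * gaussianPDF (a*x) v t
          = ∫⁻ x : ℝ, ENNReal.ofReal (gaussianPDFReal 0 1 x * gaussianPDFReal (a*x) v t) := by
            simp_rw [gaussianPDF, ← ENNReal.ofReal_mul (gaussianPDFReal_nonneg _ _ _)]
        _ = ENNReal.ofReal (∫ x : ℝ, gaussianPDFReal 0 1 x * gaussianPDFReal (a*x) v t) := by
            rw [← ofReal_integral_eq_lintegral_ofReal hint'
              (Filter.Eventually.of_forall fun x =>
                mul_nonneg (gaussianPDFReal_nonneg _ _ _) (gaussianPDFReal_nonneg _ _ _))]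
        _ = ENNReal.ofReal (gaussianPDFReal 0 1 t) := by
            rw [hvdef, gauss_pdf_conv a b hb hab t]
        _ = gaussianPDF 0 1 t := rfl
    ext s hs
    rw [Measure.map_apply hlin hs, Measure.prod_apply (hlin hs)]
    have h1 : ∀ x : ℝ, (gaussianReal 0 1) (Prod.mk x ⁻¹' ((fun z : ℝ × ℝ => a*z.1+b*z.2) ⁻¹' s))
        = ∫⁻ t in s, gaussianPDF (a*x) v t := by
      intro x
      have hpre : Prod.mk x ⁻¹' ((fun z : ℝ × ℝ => a*z.1+b*z.2) ⁻¹' s)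
          = (fun y : ℝ => (a*x) + b*y) ⁻¹' s := rfl
      rw [hpre, ← Measure.map_apply (by fun_prop) hs]
      have hcomp : (fun y : ℝ => (a*x) + b*y) = (fun u : ℝ => (a*x) + u) ∘ (fun y : ℝ => b*y) := rfl
      rw [hcomp, ← Measure.map_map (by fun_prop) (by fun_prop), gaussianReal_map_const_mul,
        gaussianReal_map_const_add]
      rw [show b*(0:ℝ) + a*x = a*x by ring, mul_one]
      exact gaussianReal_apply _ hv s
    simp_rw [h1]
    rw [gaussianReal_of_var_ne_zero 0 one_ne_zero,
      lintegral_withDensity_eq_lintegral_mul _ (measurable_gaussianPDF 0 1)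
        (Measurable.lintegral_prod_right (f := fun x t => gaussianPDF (a*x) v t) hjoint)]
    simp only [Pi.mul_apply]
    have hswap : ∫⁻ x : ℝ, gaussianPDF 0 1 x * ∫⁻ t in s, gaussianPDF (a*x) v t
        = ∫⁻ x : ℝ, ∫⁻ t in s, gaussianPDF 0 1 x * gaussianPDF (a*x) v t := by
      congr 1
      funext x
      rw [lintegral_const_mul _ (measurable_gaussianPDF _ _)]
    rw [hswap, lintegral_lintegral_swap
      ((measurable_gaussianPDF 0 1).comp measurable_fst |>.mul hjoint).aemeasurable]
    simp_rw [inner_eq]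
    rw [← gaussianReal_of_var_ne_zero 0 one_ne_zero]
    exact (gaussianReal_apply 0 one_ne_zero s).symm

theorem stmt4 {Ω : Type*} [MeasurableSpace Ω] (μ : Measure Ω) [IsProbabilityMeasure μ]
    (R₁ R₂ ξ₁ ξ₂ : Ω → ℝ) (hR₁ : Measurable R₁) (hR₂ : Measurable R₂)
    (hξ₁ : Measurable ξ₁) (hξ₂ : Measurable ξ₂)
    (hind : iIndepFun ![R₁, R₂, ξ₁, ξ₂] μ)
    (hR₁01 : ∀ᵐ ω ∂μ, R₁ ω ∈ Set.Icc (0:ℝ) 1)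
    (hR₂01 : ∀ᵐ ω ∂μ, R₂ ω ∈ Set.Icc (0:ℝ) 1)
    (hξ₁law : μ.map ξ₁ = gaussianReal 0 1)
    (hξ₂law : μ.map ξ₂ = gaussianReal 0 1)
    (R ξ : Ω → ℝ)
    (hR : R = fun ω => R₁ ω * R₂ ω)
    (hξ : ξ = fun ω =>
      (if R ω < 1 then Real.sqrt ((1 - R₁ ω) * R₂ ω) / Real.sqrt (1 - R ω) else 1) * ξ₁ ω
      + (if R ω < 1 then Real.sqrt (1 - R₂ ω) / Real.sqrt (1 - R ω) else 0) * ξ₂ ω) :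
    μ.map ξ = gaussianReal 0 1 ∧ IndepFun ξ R μ := by
  have hπ := Real.pi_pos
  set γ : Measure ℝ := gaussianReal 0 1 with hγ
  -- coefficient functions
  set A : ℝ × ℝ → ℝ :=
    fun v => if v.1 * v.2 < 1 then √((1 - v.1) * v.2) / √(1 - v.1 * v.2) else 1 with hAdef
  set B : ℝ × ℝ → ℝ :=
    fun v => if v.1 * v.2 < 1 then √(1 - v.2) / √(1 - v.1 * v.2) else 0 with hBdef
  have hAm : Measurable A :=
    Measurable.ite (measurableSet_lt (by fun_prop) measurable_const) (by fun_prop) measurable_const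
  have hBm : Measurable B :=
    Measurable.ite (measurableSet_lt (by fun_prop) measurable_const) (by fun_prop) measurable_const
  have hRm : Measurable R := by rw [hR]; fun_prop
  have hξeq : ξ = fun ω => A (R₁ ω, R₂ ω) * ξ₁ ω + B (R₁ ω, R₂ ω) * ξ₂ ω := by
    rw [hξ, hR]
  have hξm : Measurable ξ := by
    rw [hξeq]
    exact ((hAm.comp (hR₁.prodMk hR₂)).mul hξ₁).add ((hBm.comp (hR₁.prodMk hR₂)).mul hξ₂)
  have hmeasfun : ∀ i, Measurable (![R₁, R₂, ξ₁, ξ₂] i) := by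
    intro i; fin_cases i <;> assumption
  have hVm : Measurable fun ω => (R₁ ω, R₂ ω) := hR₁.prodMk hR₂
  have hZm : Measurable fun ω => (ξ₁ ω, ξ₂ ω) := hξ₁.prodMk hξ₂
  have hVZ : IndepFun (fun ω => (R₁ ω, R₂ ω)) (fun ω => (ξ₁ ω, ξ₂ ω)) μ :=
    hind.indepFun_prodMk_prodMk hmeasfun 0 1 2 3
      (by decide) (by decide) (by decide) (by decide)
  have hξ12 : IndepFun ξ₁ ξ₂ μ := hind.indepFun (show (2 : Fin 4) ≠ 3 by decide)
  have hZlaw : μ.map (fun ω => (ξ₁ ω, ξ₂ ω)) = γ.prod γ := by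
    rw [(indepFun_iff_map_prod_eq_prod_map_map hξ₁.aemeasurable hξ₂.aemeasurable).mp hξ12,
      hξ₁law, hξ₂law]
  have hVZlaw : μ.map (fun ω => ((R₁ ω, R₂ ω), (ξ₁ ω, ξ₂ ω)))
      = (μ.map (fun ω => (R₁ ω, R₂ ω))).prod (γ.prod γ) := by
    rw [(indepFun_iff_map_prod_eq_prod_map_map hVm.aemeasurable hZm.aemeasurable).mp hVZ, hZlaw]
  haveI : IsProbabilityMeasure (μ.map fun ω => (R₁ ω, R₂ ω)) :=
    Measure.isProbabilityMeasure_map hVm.aemeasurable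
  haveI : IsProbabilityMeasure (μ.map R) := Measure.isProbabilityMeasure_map hRm.aemeasurable
  haveI : IsProbabilityMeasure γ := by rw [hγ]; infer_instance
  set F : (ℝ × ℝ) × (ℝ × ℝ) → ℝ × ℝ :=
    fun p => (A p.1 * p.2.1 + B p.1 * p.2.2, p.1.1 * p.1.2) with hFdef
  have hFm : Measurable F :=
    (((hAm.comp measurable_fst).mul (measurable_fst.comp measurable_snd)).add
      ((hBm.comp measurable_fst).mul (measurable_snd.comp measurable_snd))).prodMk
      ((measurable_fst.comp measurable_fst).mul (measurable_snd.comp measurable_fst))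
  have hcomp : (fun ω => (ξ ω, R ω)) = F ∘ (fun ω => ((R₁ ω, R₂ ω), (ξ₁ ω, ξ₂ ω))) := by
    rw [hξeq, hR]; rfl
  -- the key product identity
  have hsum : ∀ v : ℝ × ℝ, v ∈ Set.Icc (0:ℝ) 1 ×ˢ Set.Icc (0:ℝ) 1 → A v ^ 2 + B v ^ 2 = 1 := by
    rintro ⟨r₁, r₂⟩ ⟨⟨h10, h11⟩, ⟨h20, h21⟩⟩
    by_cases h : r₁ * r₂ < 1
    · have h01 : (0:ℝ) < 1 - r₁ * r₂ := by linarith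
      have e1 : (0:ℝ) ≤ (1 - r₁) * r₂ := mul_nonneg (by linarith) h20
      have e2 : (0:ℝ) ≤ 1 - r₂ := by linarith
      simp only [hAdef, hBdef, if_pos h]
      rw [div_pow, div_pow, Real.sq_sqrt e1, Real.sq_sqrt e2, Real.sq_sqrt h01.le,
        ← add_div, div_eq_one_iff_eq (ne_of_gt h01)]
      ring
    · simp only [hAdef, hBdef, if_neg h]
      norm_num
  have hmain : μ.map (fun ω => (ξ ω, R ω)) = γ.prod (μ.map R) := by
    rw [hcomp, ← Measure.map_map hFm (hVm.prodMk hZm), hVZlaw]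
    refine (Measure.prod_eq (μ := γ) (ν := μ.map R) fun s t hs ht => ?_).symm
    rw [Measure.map_apply hFm (hs.prod ht), Measure.prod_apply (hFm (hs.prod ht))]
    have hlinm : ∀ v : ℝ × ℝ, Measurable fun z : ℝ × ℝ => A v * z.1 + B v * z.2 := by
      intro v; fun_prop
    have hptwise : ∀ v ∈ Set.Icc (0:ℝ) 1 ×ˢ Set.Icc (0:ℝ) 1,
        (γ.prod γ) (Prod.mk v ⁻¹' (F ⁻¹' (s ×ˢ t)))
          = Set.indicator ((fun v : ℝ × ℝ => v.1 * v.2) ⁻¹' t) (fun _ => γ s) v := by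
      intro v hv
      by_cases hvt : v.1 * v.2 ∈ t
      · have hset : Prod.mk v ⁻¹' (F ⁻¹' (s ×ˢ t))
            = (fun z : ℝ × ℝ => A v * z.1 + B v * z.2) ⁻¹' s := by
          ext z
          simp only [Set.mem_preimage, hFdef, Set.mem_prod, Set.mem_setOf_eq]
          exact ⟨fun h => h.1, fun h => ⟨h, hvt⟩⟩
        rw [hset, ← Measure.map_apply (hlinm v) hs, hγ, gauss_map_line _ _ (hsum v hv)]
        simp [Set.indicator, hvt]
      · have hset : Prod.mk v ⁻¹' (F ⁻¹' (s ×ˢ t)) = ∅ := by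
          ext z
          simp only [Set.mem_preimage, hFdef, Set.mem_prod, Set.mem_empty_iff_false, iff_false]
          exact fun h => hvt h.2
        rw [hset]
        simp [Set.indicator, hvt]
    have hmulm : Measurable fun v : ℝ × ℝ => v.1 * v.2 := by fun_prop
    have hae : ∀ᵐ v ∂(μ.map fun ω => (R₁ ω, R₂ ω)),
        v ∈ Set.Icc (0:ℝ) 1 ×ˢ Set.Icc (0:ℝ) 1 := by
      refine (ae_map_iff hVm.aemeasurable (measurableSet_Icc.prod measurableSet_Icc)).mpr ?_
      filter_upwards [hR₁01, hR₂01] with ω h1 h2 using ⟨h1, h2⟩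
    rw [lintegral_congr_ae (hae.mono fun v hv => hptwise v hv),
      lintegral_indicator_const (hmulm ht)]
    have hpt : (μ.map fun ω => (R₁ ω, R₂ ω)) ((fun v : ℝ × ℝ => v.1 * v.2) ⁻¹' t)
        = (μ.map R) t := by
      rw [Measure.map_apply hVm (hmulm ht), Measure.map_apply hRm ht, hR]
      rfl
    rw [hpt]
  have hξlaw : μ.map ξ = γ := by
    have hfst : ξ = Prod.fst ∘ (fun ω => (ξ ω, R ω)) := rfl
    rw [hfst, ← Measure.map_map measurable_fst (hξm.prodMk hRm), hmain, Measure.map_fst_prod,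
      measure_univ, one_smul]
  exact ⟨hξlaw, (indepFun_iff_map_prod_eq_prod_map_map hξm.aemeasurable hRm.aemeasurable).mpr
    (by rw [hmain, hξlaw])⟩
end

section
/- For independent random variables R₁, R₂, ξ₁, ξ₂ with R₁, R₂ ∈ [0,1] a.s., ξ₁, ξ₂ ~ N(0,1), and parameters 0 < s < t < u with σ = √(t/s), τ = √(u/t), α = √s: if X_t = σ(√R₁·X_s + α√(1−R₁)·ξ₁) and X_u = τ(√R₂·X_t + σα√(1−R₂)·ξ₂), then X_u = στ(√(R₁R₂)·X_s + α√(1−R₁R₂)·ξ) where ξ is the standard Gaussian random variable defined in terms of R₁, R₂, ξ₁, ξ₂ as ξ = (√((1−R₁)R₂)/√(1−R₁R₂))1_{R₁R₂<1}ξ₁ + 1_{R₁R₂=1}ξ₁ + (√(1−R₂)/√(1−R₁R₂))1_{R₁R₂<1}ξ₂. -/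
open MeasureTheory ProbabilityTheory

theorem stmt5 {Ω : Type*} [MeasurableSpace Ω] (μ : Measure Ω) [IsProbabilityMeasure μ]
    (Xs R₁ R₂ ξ₁ ξ₂ : Ω → ℝ)
    (hXs : Measurable Xs) (hR₁ : Measurable R₁) (hR₂ : Measurable R₂)
    (hξ₁ : Measurable ξ₁) (hξ₂ : Measurable ξ₂)
    (hind : iIndepFun ![Xs, R₁, R₂, ξ₁, ξ₂] μ)
    (hR₁01 : ∀ᵐ ω ∂μ, R₁ ω ∈ Set.Icc (0:ℝ) 1)
    (hR₂01 : ∀ᵐ ω ∂μ, R₂ ω ∈ Set.Icc (0:ℝ) 1)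
    (hξ₁law : μ.map ξ₁ = gaussianReal 0 1)
    (hξ₂law : μ.map ξ₂ = gaussianReal 0 1)
    (s t u σ τ α : ℝ) (hs : 0 < s) (hst : s < t) (htu : t < u)
    (hσ : σ = Real.sqrt (t / s)) (hτ : τ = Real.sqrt (u / t)) (hα : α = Real.sqrt s)
    (Xt Xu ξ : Ω → ℝ)
    (hXt : Xt = fun ω => σ * (Real.sqrt (R₁ ω) * Xs ω + α * Real.sqrt (1 - R₁ ω) * ξ₁ ω))
    (hXu : Xu = fun ω => τ * (Real.sqrt (R₂ ω) * Xt ω + σ * α * Real.sqrt (1 - R₂ ω) * ξ₂ ω))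
    (hξ : ξ = fun ω =>
      (if R₁ ω * R₂ ω < 1 then
          Real.sqrt ((1 - R₁ ω) * R₂ ω) / Real.sqrt (1 - R₁ ω * R₂ ω) else 0) * ξ₁ ω
      + (if R₁ ω * R₂ ω = 1 then 1 else 0) * ξ₁ ω
      + (if R₁ ω * R₂ ω < 1 then
          Real.sqrt (1 - R₂ ω) / Real.sqrt (1 - R₁ ω * R₂ ω) else 0) * ξ₂ ω) :
    ∀ᵐ ω ∂μ, Xu ω = σ * τ * (Real.sqrt (R₁ ω * R₂ ω) * Xs ω
      + α * Real.sqrt (1 - R₁ ω * R₂ ω) * ξ ω) := by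
  subst hXt hXu hξ
  filter_upwards [hR₁01, hR₂01] with ω h1 h2
  obtain ⟨h10, h11⟩ := h1
  obtain ⟨h20, h21⟩ := h2
  rcases lt_or_eq_of_le (mul_le_one₀ h11 h20 h21) with hlt | heq
  · have hd : (0:ℝ) < Real.sqrt (1 - R₁ ω * R₂ ω) := Real.sqrt_pos.mpr (by linarith)
    simp only [if_pos hlt, if_neg (ne_of_lt hlt)]
    have e1 : Real.sqrt (R₂ ω) * Real.sqrt (R₁ ω) = Real.sqrt (R₁ ω * R₂ ω) := by
      rw [← Real.sqrt_mul h20, mul_comm]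
    have e2 : Real.sqrt (R₂ ω) * Real.sqrt (1 - R₁ ω) = Real.sqrt ((1 - R₁ ω) * R₂ ω) := by
      rw [← Real.sqrt_mul h20, mul_comm]
    have e3 : Real.sqrt (1 - R₁ ω * R₂ ω) *
        (Real.sqrt ((1 - R₁ ω) * R₂ ω) / Real.sqrt (1 - R₁ ω * R₂ ω)) =
        Real.sqrt ((1 - R₁ ω) * R₂ ω) := mul_div_cancel₀ _ (ne_of_gt hd)
    have e4 : Real.sqrt (1 - R₁ ω * R₂ ω) *
        (Real.sqrt (1 - R₂ ω) / Real.sqrt (1 - R₁ ω * R₂ ω)) =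
        Real.sqrt (1 - R₂ ω) := mul_div_cancel₀ _ (ne_of_gt hd)
    linear_combination σ * τ * Xs ω * e1 + σ * τ * α * ξ₁ ω * e2 - σ * τ * α * ξ₁ ω * e3 - σ * τ * α * ξ₂ ω * e4
  · have hR1 : R₁ ω = 1 := by nlinarith
    have hR2 : R₂ ω = 1 := by nlinarith
    simp [hR1, hR2]
    ring
end

section
/- For integers j, k ≥ 0 and u > 0, e^{−ku/2}(1 − √(1−e^{−u}))^j = ∫₀^∞ e^{−λu} (ε_{k/2} * m^{*j})(dλ), where m = (1/(2√π)) Σ_{n=1}^∞ [Γ(n−1/2)/n!] ε_n and m^{*j} denotes the j-fold convolution of m (with m^{*0} = ε₀). -/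
open MeasureTheory Real Finset

noncomputable def mMeas : Measure ℝ :=
  Measure.sum (fun n : ℕ =>
    (ENNReal.ofReal (Real.Gamma ((n + 1 : ℝ) - 1/2)
      / ((n + 1).factorial * (2 * Real.sqrt π)))) • Measure.dirac ((n : ℝ) + 1))

noncomputable def convPow (μ : Measure ℝ) : ℕ → Measure ℝ
  | 0 => Measure.dirac 0
  | j + 1 => (convPow μ j).conv μ

noncomputable def wSeq (n : ℕ) : ℝ := (catalan n : ℝ) / (2 * 4 ^ n)

lemma wSeq_nonneg (n : ℕ) : 0 ≤ wSeq n := by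
  unfold wSeq; positivity

lemma sum_wSeq (N : ℕ) :
    ∑ n ∈ range N, wSeq n = 1 - (Nat.centralBinom N : ℝ) / 4 ^ N := by
  induction N with
  | zero => simp [Nat.centralBinom]
  | succ N ih =>
      rw [Finset.sum_range_succ, ih]
      have h' : ((N : ℝ) + 1) * Nat.centralBinom (N + 1)
          = 2 * (2 * N + 1) * Nat.centralBinom N := by
        exact_mod_cast Nat.succ_mul_centralBinom_succ N
      have hcat : ((N:ℝ) + 1) * catalan N = Nat.centralBinom N := by
        exact_mod_cast succ_mul_catalan_eq_centralBinom N
      have hN : (N : ℝ) + 1 ≠ 0 := by positivity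
      have hc2 : (Nat.centralBinom (N + 1) : ℝ) = 2 * (2 * N + 1) * catalan N := by
        apply mul_left_cancel₀ hN
        rw [h', ← hcat]; ring
      rw [hc2, ← hcat]
      unfold wSeq
      field_simp
      ring

lemma sum_wSeq_le (N : ℕ) : ∑ n ∈ range N, wSeq n ≤ 1 := by
  rw [sum_wSeq]
  have : 0 ≤ (Nat.centralBinom N : ℝ) / 4 ^ N := by positivity
  linarith

lemma summable_wSeq : Summable wSeq :=
  summable_of_sum_range_le wSeq_nonneg sum_wSeq_le

lemma tsum_wSeq_le : ∑' n, wSeq n ≤ 1 :=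
  tsum_le_of_sum_range_le wSeq_nonneg sum_wSeq_le

lemma catalan_conv (n : ℕ) :
    ∑ k ∈ range (n + 1), (catalan k : ℝ) * catalan (n - k) = catalan (n + 1) := by
  rw [catalan_succ n]
  push_cast [Fin.sum_univ_eq_sum_range (fun i => (catalan i : ℝ) * catalan (n - i))]
  rfl

lemma hasSum_wSeq (x : ℝ) (hx0 : 0 ≤ x) (hx1 : x < 1) :
    HasSum (fun n => wSeq n * x ^ (n + 1)) (1 - Real.sqrt (1 - x)) := by
  set t : ℕ → ℝ := fun n => wSeq n * x ^ (n + 1) with ht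
  have htnn : ∀ n, 0 ≤ t n := fun n => by
    have := wSeq_nonneg n; positivity
  have htle : ∀ n, t n ≤ wSeq n * x := by
    intro n
    have hxp : x ^ (n + 1) ≤ x := by
      calc x ^ (n + 1) ≤ x ^ 1 := pow_le_pow_of_le_one hx0 hx1.le (by omega)
        _ = x := pow_one x
    exact mul_le_mul_of_nonneg_left hxp (wSeq_nonneg n)
  have hsumm : Summable t := by
    apply Summable.of_nonneg_of_le htnn htle
    exact summable_wSeq.mul_right x
  set S := ∑' n, t n with hS
  have hSnn : 0 ≤ S := tsum_nonneg htnn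
  have hSle : S ≤ x := by
    calc S ≤ ∑' n, wSeq n * x := Summable.tsum_le_tsum htle hsumm (summable_wSeq.mul_right x)
      _ = (∑' n, wSeq n) * x := by rw [tsum_mul_right]
      _ ≤ 1 * x := by
          apply mul_le_mul_of_nonneg_right tsum_wSeq_le hx0
      _ = x := one_mul x
  have hSlt : S < 1 := lt_of_le_of_lt hSle hx1
  -- Cauchy product
  have hnorm : Summable fun n => ‖t n‖ := by
    simpa [Real.norm_of_nonneg (htnn _)] using hsumm
  have hcp : S * S = ∑' n, ∑ k ∈ range (n + 1), t k * t (n - k) :=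
    tsum_mul_tsum_eq_tsum_sum_range_of_summable_norm hnorm hnorm
  have hinner : ∀ n, ∑ k ∈ range (n + 1), t k * t (n - k) = 2 * t (n + 1) := by
    intro n
    have : ∀ k ∈ range (n + 1), t k * t (n - k)
        = (catalan k : ℝ) * catalan (n - k) * (x ^ (n + 2) / (4 * 4 ^ n)) := by
      intro k hk
      rw [mem_range] at hk
      have hkn : k ≤ n := by omega
      obtain ⟨a, rfl⟩ : ∃ a, n = k + a := ⟨n - k, by omega⟩
      simp only [ht, wSeq, show k + a - k = a from by omega]
      rw [pow_add (4:ℝ) k a, show k + a + 2 = (k+1)+(a+1) from by omega, pow_add x (k+1) (a+1)]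
      field_simp
      ring
    rw [Finset.sum_congr rfl this, ← Finset.sum_mul, catalan_conv n]
    simp only [ht, wSeq]
    field_simp
    ring
  have hshift : ∑' n, (2 : ℝ) * t (n + 1) = 2 * (S - t 0) := by
    have h1 : Summable fun n => t (n + 1) := by
      exact (summable_nat_add_iff 1).mpr hsumm
    rw [tsum_mul_left]
    congr 1
    rw [hS, Summable.tsum_eq_zero_add hsumm]; ring
  have hquad : S * S = 2 * (S - t 0) := by
    rw [hcp]
    rw [tsum_congr hinner, hshift]
  have ht0 : t 0 = x / 2 := by
    simp [ht, wSeq]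
    ring
  have hsq : (1 - S) ^ 2 = 1 - x := by
    rw [ht0] at hquad; nlinarith [hquad]
  have h1S : 0 < 1 - S := by linarith
  have hsqrt : Real.sqrt (1 - x) = 1 - S := by
    rw [← hsq, Real.sqrt_sq h1S.le]
  have : S = 1 - Real.sqrt (1 - x) := by rw [hsqrt]; ring
  rw [← this]
  exact hsumm.hasSum

lemma Gamma_nat_add_half (n : ℕ) :
    Real.Gamma ((n : ℝ) + 1/2) = Real.sqrt π * (2 * n).factorial / (4 ^ n * n.factorial) := by
  induction n with
  | zero =>
      rw [show ((0:ℕ):ℝ) + 1/2 = 1/2 by norm_num, Real.Gamma_one_half_eq]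
      norm_num
  | succ n ih =>
      have key : ((n : ℝ) + 1) + 1/2 = ((n : ℝ) + 1/2) + 1 := by ring
      push_cast
      rw [key, Real.Gamma_add_one (by positivity), ih]
      have h1 : ((2 * (n+1)).factorial : ℝ) = (2*n+2) * ((2*n+1) * (2*n).factorial) := by
        rw [show 2 * (n+1) = (2*n+1) + 1 from by omega, Nat.factorial_succ]
        push_cast [Nat.factorial_succ]
        ring
      have h2 : ((n+1).factorial : ℝ) = (n+1) * n.factorial := by
        push_cast [Nat.factorial_succ]; ring
      rw [h1, h2]
      have hf : (n.factorial : ℝ) ≠ 0 := by positivity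
      field_simp
      ring

lemma weight_eq (n : ℕ) :
    Real.Gamma ((n + 1 : ℝ) - 1/2) / ((n + 1).factorial * (2 * Real.sqrt π)) = wSeq n := by
  have h : (n + 1 : ℝ) - 1/2 = (n : ℝ) + 1/2 := by ring
  rw [h, _root_.Gamma_nat_add_half]
  have hcb : ((2*n).factorial : ℝ) = Nat.centralBinom n * n.factorial * n.factorial := by
    have := Nat.choose_mul_factorial_mul_factorial (show n ≤ 2*n by omega)
    rw [show 2*n - n = n from by omega] at this
    rw [Nat.centralBinom]
    exact_mod_cast this.symm
  have hcat : ((n:ℝ) + 1) * catalan n = Nat.centralBinom n := by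
    exact_mod_cast succ_mul_catalan_eq_centralBinom n
  have h2 : ((n+1).factorial : ℝ) = (n+1) * n.factorial := by
    push_cast [Nat.factorial_succ]; ring
  rw [hcb, ← hcat, h2]
  unfold wSeq
  have hf : (n.factorial : ℝ) ≠ 0 := by positivity
  have hsp : Real.sqrt π ≠ 0 := by
    have := Real.sqrt_pos.mpr Real.pi_pos
    exact ne_of_gt this
  field_simp

lemma mMeas_eq : mMeas = Measure.sum (fun n : ℕ =>
    ENNReal.ofReal (wSeq n) • Measure.dirac ((n : ℝ) + 1)) := by
  unfold mMeas
  congr 1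
  funext n
  rw [weight_eq]

instance : SFinite mMeas := by
  rw [mMeas_eq]; infer_instance

lemma laplace_mMeas (u : ℝ) (hu : 0 < u) :
    ∫ lam, Real.exp (-lam * u) ∂mMeas = 1 - Real.sqrt (1 - Real.exp (-u)) := by
  set x := Real.exp (-u) with hx
  have hx0 : 0 < x := Real.exp_pos _
  have hx1 : x < 1 := by
    rw [hx]
    exact Real.exp_lt_one_iff.mpr (by linarith)
  have hS := hasSum_wSeq x hx0.le hx1
  set f : ℝ → ℝ := fun lam => Real.exp (-lam * u) with hf
  have hfc : Continuous f := by fun_prop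
  have hfval : ∀ n : ℕ, f ((n : ℝ) + 1) = x ^ (n + 1) := by
    intro n
    rw [hf, hx]
    simp only
    rw [← Real.exp_nat_mul]
    congr 1
    push_cast
    ring
  have hInt : Integrable f mMeas := by
    rw [mMeas_eq]
    refine ⟨hfc.aestronglyMeasurable, ?_⟩
    rw [HasFiniteIntegral, lintegral_sum_measure]
    have : ∀ n : ℕ, ∫⁻ a, ‖f a‖ₑ ∂(ENNReal.ofReal (wSeq n) • Measure.dirac ((n : ℝ) + 1))
        = ENNReal.ofReal (wSeq n * x ^ (n + 1)) := by
      intro n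
      rw [lintegral_smul_measure, lintegral_dirac' _ (hfc.measurable.enorm)]
      rw [hfval n, Real.enorm_eq_ofReal (pow_nonneg hx0.le _), smul_eq_mul,
        ← ENNReal.ofReal_mul (wSeq_nonneg n)]
    rw [tsum_congr this, ← ENNReal.ofReal_tsum_of_nonneg
      (fun n => by have := wSeq_nonneg n; positivity) hS.summable]
    exact ENNReal.ofReal_lt_top
  rw [mMeas_eq] at hInt ⊢
  rw [integral_sum_measure hInt]
  have : ∀ n : ℕ, ∫ lam, f lam ∂(ENNReal.ofReal (wSeq n) • Measure.dirac ((n : ℝ) + 1))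
      = wSeq n * x ^ (n + 1) := by
    intro n
    rw [integral_smul_measure, integral_dirac, hfval n,
      ENNReal.toReal_ofReal (wSeq_nonneg n)]
    simp
  rw [tsum_congr this, hS.tsum_eq]

lemma laplace_conv (μ ν : Measure ℝ) [SFinite μ] [SFinite ν] (u : ℝ) :
    ∫ lam, Real.exp (-lam * u) ∂(μ.conv ν)
      = (∫ lam, Real.exp (-lam * u) ∂μ) * ∫ lam, Real.exp (-lam * u) ∂ν := by
  have hfc : Continuous (fun lam : ℝ => Real.exp (-lam * u)) := by fun_prop
  unfold Measure.conv
  rw [integral_map (μ := μ.prod ν) measurable_add.aemeasurable hfc.aestronglyMeasurable]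
  have : ∀ p : ℝ × ℝ, Real.exp (-(p.1 + p.2) * u)
      = Real.exp (-p.1 * u) * Real.exp (-p.2 * u) := by
    intro p
    rw [← Real.exp_add]
    ring_nf
  simp_rw [this]
  exact integral_prod_mul (μ := μ) (ν := ν) (fun lam => Real.exp (-lam * u)) (fun lam => Real.exp (-lam * u))

instance convPow_sfinite (j : ℕ) : SFinite (convPow mMeas j) := by
  induction j with
  | zero => rw [convPow]; infer_instance
  | succ j ih => rw [convPow]; infer_instance

lemma laplace_convPow (j : ℕ) (u : ℝ) (hu : 0 < u) :
    ∫ lam, Real.exp (-lam * u) ∂(convPow mMeas j)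
      = (1 - Real.sqrt (1 - Real.exp (-u))) ^ j := by
  induction j with
  | zero =>
      rw [convPow, integral_dirac]
      simp
  | succ j ih =>
      rw [convPow, laplace_conv _ _ u, ih, laplace_mMeas u hu, pow_succ]

theorem stmt17 (j k : ℕ) (u : ℝ) (hu : 0 < u) :
    Real.exp (-(k : ℝ) * u / 2) * (1 - Real.sqrt (1 - Real.exp (-u))) ^ j
      = ∫ lam, Real.exp (-lam * u)
          ∂((Measure.dirac ((k : ℝ) / 2)).conv (convPow mMeas j)) := by
  rw [laplace_conv _ _ u, integral_dirac, laplace_convPow j u hu]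
  congr 2
  ring
end

section
/- Let V_p have Gamma distribution with density h_p(v) = (b^p/Γ(p)) v^{p−1} e^{−bv} for v > 0, where b > 0. Let g : (0,∞) → ℝ be measurable with g extendable by g(0) = 0 and g(v)/v bounded. Then lim_{p→0⁺} (1/p) E[g(V_p)] = ∫₀^∞ (g(v)/v) e^{−bv} dv. -/
open MeasureTheory Filter

theorem stmt18 (b : ℝ) (hb : 0 < b) (g : ℝ → ℝ) (hg : Measurable g)
    (C : ℝ) (hgC : ∀ v : ℝ, 0 < v → |g v| ≤ C * v) :
    Tendsto (fun p : ℝ =>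
        (1 / p) * ∫ v in Set.Ioi (0:ℝ),
          g v * (b ^ p / Real.Gamma p * v ^ (p - 1) * Real.exp (-b * v)))
      (nhdsWithin 0 (Set.Ioi 0))
      (nhds (∫ v in Set.Ioi (0:ℝ), (g v / v) * Real.exp (-b * v))) := by
  set F : ℝ → ℝ := fun p => ∫ v in Set.Ioi (0:ℝ),
      (g v / v) * v ^ p * Real.exp (-b * v) with hF
  -- dominating bound
  have hbound : IntegrableOn (fun v : ℝ => |C| * ((1 + v) * Real.exp (-b * v)))
      (Set.Ioi 0) := by
    have h0 : IntegrableOn (fun v : ℝ => v ^ (0:ℝ) * Real.exp (-b * v ^ (1:ℝ)))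
        (Set.Ioi 0) := integrableOn_rpow_mul_exp_neg_mul_rpow (by norm_num) (by norm_num) hb
    have h1 : IntegrableOn (fun v : ℝ => v ^ (1:ℝ) * Real.exp (-b * v ^ (1:ℝ)))
        (Set.Ioi 0) := integrableOn_rpow_mul_exp_neg_mul_rpow (by norm_num) (by norm_num) hb
    have h0' : IntegrableOn (fun v : ℝ => Real.exp (-b * v)) (Set.Ioi 0) := by
      refine h0.congr_fun (fun v hv => ?_) measurableSet_Ioi
      dsimp only
      rw [Real.rpow_zero, Real.rpow_one, one_mul]
    have h1' : IntegrableOn (fun v : ℝ => v * Real.exp (-b * v)) (Set.Ioi 0) := by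
      refine h1.congr_fun (fun v hv => ?_) measurableSet_Ioi
      dsimp only
      rw [Real.rpow_one]
    have h2 := (h0'.add h1').const_mul |C|
    exact h2.congr (Filter.Eventually.of_forall fun v => by simp only [Pi.add_apply]; ring)
  -- convergence of F
  have hFt : Tendsto F (nhdsWithin 0 (Set.Ioi 0))
      (nhds (∫ v in Set.Ioi (0:ℝ), (g v / v) * Real.exp (-b * v))) := by
    apply tendsto_integral_filter_of_dominated_convergence
      (fun v => |C| * ((1 + v) * Real.exp (-b * v)))
    · filter_upwards with p
      exact (((hg.div measurable_id).mul
        (measurable_id.pow_const p : Measurable fun v : ℝ => v ^ p)).mul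
        (by fun_prop : Measurable fun v : ℝ => Real.exp (-b * v))).aestronglyMeasurable
    · filter_upwards [Ioo_mem_nhdsGT_of_mem (by simp : (0:ℝ) ∈ Set.Ico 0 1)] with p hp
      rw [ae_restrict_iff' measurableSet_Ioi]
      filter_upwards with v hv
      have hv' : 0 < v := hv
      have hC : |g v / v| ≤ |C| := by
        rw [abs_div, abs_of_pos hv', div_le_iff₀ hv']
        calc |g v| ≤ C * v := hgC v hv'
          _ ≤ |C| * v := by
            have := le_abs_self C
            nlinarith
      have hvp : v ^ p ≤ 1 + v := by
        rcases le_total v 1 with h | h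
        · have : v ^ p ≤ 1 := Real.rpow_le_one hv'.le h hp.1.le
          linarith
        · have : v ^ p ≤ v ^ (1:ℝ) :=
            Real.rpow_le_rpow_of_exponent_le h hp.2.le
          rw [Real.rpow_one] at this
          linarith
      have hvp0 : 0 ≤ v ^ p := (Real.rpow_pos_of_pos hv' _).le
      calc ‖g v / v * v ^ p * Real.exp (-b * v)‖
          = |g v / v| * (v ^ p) * Real.exp (-b * v) := by
            rw [Real.norm_eq_abs, abs_mul, abs_mul, abs_of_nonneg hvp0,
              abs_of_pos (Real.exp_pos _)]
        _ ≤ |C| * ((1 + v) * Real.exp (-b * v)) := by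
            have he := (Real.exp_pos (-b * v)).le
            have h1 : |g v / v| * (v ^ p) ≤ |C| * (1 + v) := by
              have := abs_nonneg (g v / v)
              nlinarith
            calc |g v / v| * (v ^ p) * Real.exp (-b * v)
                ≤ |C| * (1 + v) * Real.exp (-b * v) := by
                  exact mul_le_mul_of_nonneg_right h1 he
              _ = |C| * ((1 + v) * Real.exp (-b * v)) := by ring
    · exact hbound
    · rw [ae_restrict_iff' measurableSet_Ioi]
      filter_upwards with v hv
      have hv' : (0:ℝ) < v := hv
      have h1 : Tendsto (fun p : ℝ => v ^ p) (nhdsWithin 0 (Set.Ioi 0))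
          (nhds 1) := by
        have : ContinuousAt (fun p : ℝ => v ^ p) 0 :=
          Real.continuousAt_const_rpow hv'.ne'
        simpa [Real.rpow_zero] using this.continuousWithinAt.tendsto
      have := (h1.const_mul (g v / v)).mul_const (Real.exp (-b * v))
      simpa using this
  -- convergence of the prefactor b^p / Gamma (p+1)
  have hpre : Tendsto (fun p : ℝ => b ^ p / Real.Gamma (p + 1))
      (nhdsWithin 0 (Set.Ioi 0)) (nhds 1) := by
    have h1 : Tendsto (fun p : ℝ => b ^ p) (nhdsWithin 0 (Set.Ioi 0)) (nhds 1) := by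
      have : ContinuousAt (fun p : ℝ => b ^ p) 0 :=
        Real.continuousAt_const_rpow hb.ne'
      simpa [Real.rpow_zero] using this.continuousWithinAt.tendsto
    have h2 : Tendsto (fun p : ℝ => Real.Gamma (p + 1)) (nhdsWithin 0 (Set.Ioi 0))
        (nhds 1) := by
      have hc : ContinuousAt Real.Gamma 1 := by
        refine (Real.differentiableAt_Gamma fun m => ?_).continuousAt
        have : (0:ℝ) ≤ m := Nat.cast_nonneg m
        intro h; linarith
      have : Tendsto (fun p : ℝ => p + 1) (nhdsWithin 0 (Set.Ioi 0)) (nhds 1) := by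
        have h3 := (continuous_add_right (1:ℝ)).tendsto 0
        simpa using h3.mono_left nhdsWithin_le_nhds
      have h4 := hc.tendsto.comp this
      rw [Real.Gamma_one] at h4
      exact h4
    have := h1.div h2 one_ne_zero
    rw [div_one] at this
    exact this
  -- combine
  have hmain := hpre.mul hFt
  rw [one_mul] at hmain
  refine hmain.congr' ?_
  filter_upwards [self_mem_nhdsWithin] with p hp
  have hp' : (0:ℝ) < p := hp
  have hint : (∫ v in Set.Ioi (0:ℝ),
      g v * (b ^ p / Real.Gamma p * v ^ (p - 1) * Real.exp (-b * v)))
      = b ^ p / Real.Gamma p * F p := by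
    rw [hF, ← integral_const_mul]
    refine setIntegral_congr_fun measurableSet_Ioi (fun v hv => ?_)
    have hv' : (0:ℝ) < v := hv
    have : v ^ (p - 1) = v ^ p / v := by
      rw [Real.rpow_sub hv', Real.rpow_one]
    rw [this]
    field_simp
  rw [hint]
  have hG : Real.Gamma (p + 1) = p * Real.Gamma p := Real.Gamma_add_one hp'.ne'
  rw [hG]
  have hGp : Real.Gamma p ≠ 0 := (Real.Gamma_pos_of_pos hp').ne'
  field_simp
end
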